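/- arXiv:1805.05861 — 2 statements merged into one kernel-verified Lean document; each statement's English description precedes it below -/
import Mathlib

section
/- For every r > 0: v″(r) = β r^{β−2} ( β−1 + (β̄−1) r^{pβ} ) / (1+r^{pβ})², and consequently β̄ − 1 ≤ r·v″(r)/v′(r) = ( β−1 + (β̄−1) r^{pβ} ) / (1+r^{pβ}) ≤ β − 1. -/
open Filter Set

noncomputable section

/-- The auxiliary function `v(r) = ∫₀^{r^β} (1 + τ^p)⁻¹ dτ`. -/
def auxv (β p : ℝ) (r : ℝ) : ℝ := ∫ τ in (0 : ℝ)..(r ^ β), (1 + τ ^ p)⁻¹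

lemma hasDerivAt_auxv (β p r : ℝ) (hp : 0 ≤ p) (hr : 0 < r) :
    HasDerivAt (auxv β p) (β * r ^ (β - 1) * (1 + r ^ (p * β))⁻¹) r := by
  have hrb : 0 < r ^ β := Real.rpow_pos_of_pos hr β
  have hcontp : Continuous (fun τ : ℝ => τ ^ p) :=
    continuous_iff_continuousAt.2 fun x => Real.continuousAt_rpow_const x p (Or.inr hp)
  have hconton : ContinuousOn (fun τ : ℝ => (1 + τ ^ p)⁻¹) (Set.Icc 0 (r ^ β)) := by
    apply ContinuousOn.inv₀ (by fun_prop)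
    intro τ hτ
    have : 0 ≤ τ ^ p := Real.rpow_nonneg hτ.1 p
    positivity
  have hint : IntervalIntegrable (fun τ : ℝ => (1 + τ ^ p)⁻¹) MeasureTheory.volume 0 (r ^ β) := by
    apply ContinuousOn.intervalIntegrable
    rwa [Set.uIcc_of_le hrb.le]
  have hca : ContinuousAt (fun τ : ℝ => (1 + τ ^ p)⁻¹) (r ^ β) := by
    have h0 : (0:ℝ) ≤ (r ^ β) ^ p := Real.rpow_nonneg hrb.le p
    exact (continuousAt_const.add (hcontp.continuousAt)).inv₀ (by show (1:ℝ) + (r ^ β) ^ p ≠ 0; positivity)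
  have hmeas : StronglyMeasurableAtFilter (fun τ : ℝ => (1 + τ ^ p)⁻¹) (nhds (r ^ β)) := by
    refine ⟨Set.Ioi 0, Ioi_mem_nhds hrb, ?_⟩
    have : ContinuousOn (fun τ : ℝ => (1 + τ ^ p)⁻¹) (Set.Ioi 0) := by
      apply ContinuousOn.inv₀ (by fun_prop)
      intro τ hτ
      have : 0 ≤ τ ^ p := Real.rpow_nonneg (le_of_lt hτ) p
      positivity
    exact this.aestronglyMeasurable measurableSet_Ioi
  have h1 : HasDerivAt (fun u : ℝ => ∫ τ in (0:ℝ)..u, (1 + τ ^ p)⁻¹)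
      ((1 + (r ^ β) ^ p)⁻¹) (r ^ β) :=
    intervalIntegral.integral_hasDerivAt_right hint hmeas hca
  have h2 : HasDerivAt (fun x : ℝ => x ^ β) (β * r ^ (β - 1)) r :=
    Real.hasDerivAt_rpow_const (Or.inl hr.ne')
  have := h1.comp r h2
  rw [← Real.rpow_mul hr.le] at this
  refine this.congr_deriv ?_
  rw [mul_comm β p]
  ring

theorem statement10 (βb β : ℝ) (hβb : 1 < βb) (hββ : βb < β)
    (p : ℝ) (hp : p = (β - βb) / β) :
    ∀ r : ℝ, 0 < r →
      HasDerivAt (deriv (auxv β p))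
        (β * r ^ (β - 2) * ((β - 1 + (βb - 1) * r ^ (p * β)) / (1 + r ^ (p * β)) ^ 2)) r ∧
      r * (β * r ^ (β - 2) * ((β - 1 + (βb - 1) * r ^ (p * β)) / (1 + r ^ (p * β)) ^ 2))
          / deriv (auxv β p) r
        = (β - 1 + (βb - 1) * r ^ (p * β)) / (1 + r ^ (p * β)) ∧
      βb - 1 ≤ (β - 1 + (βb - 1) * r ^ (p * β)) / (1 + r ^ (p * β)) ∧
      (β - 1 + (βb - 1) * r ^ (p * β)) / (1 + r ^ (p * β)) ≤ β - 1 := by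
  have hβ0 : (0:ℝ) < β := by linarith
  have hp0 : 0 ≤ p := by
    rw [hp]; apply div_nonneg <;> linarith
  have hpβ : p * β = β - βb := by
    rw [hp, div_mul_cancel₀ _ hβ0.ne']
  intro r hr
  -- notation
  set s := r ^ (p * β) with hs
  have hs0 : 0 < s := Real.rpow_pos_of_pos hr _
  have h1s : 0 < 1 + s := by linarith
  have h1s' : (1 + s) ≠ 0 := h1s.ne'
  -- deriv auxv equals g near r
  have hgev : deriv (auxv β p) =ᶠ[nhds r] fun x => β * x ^ (β - 1) * (1 + x ^ (p * β))⁻¹ := by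
    filter_upwards [eventually_gt_nhds hr] with x hx
    exact (hasDerivAt_auxv β p x hp0 hx).deriv
  have hdval : deriv (auxv β p) r = β * r ^ (β - 1) * (1 + s)⁻¹ :=
    (hasDerivAt_auxv β p r hp0 hr).deriv
  -- derivative of g
  have h1 : HasDerivAt (fun x : ℝ => β * x ^ (β - 1)) (β * ((β - 1) * r ^ (β - 1 - 1))) r :=
    (Real.hasDerivAt_rpow_const (Or.inl hr.ne')).const_mul β
  have h2 : HasDerivAt (fun x : ℝ => 1 + x ^ (p * β)) (0 + p * β * r ^ (p * β - 1)) r :=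
    (hasDerivAt_const r 1).add (Real.hasDerivAt_rpow_const (Or.inl hr.ne'))
  have h3 := h1.mul (h2.inv (by simpa using h1s'))
  -- key rpow identities
  have e1 : r ^ (β - 1 - 1) = r ^ β / r / r := by
    rw [Real.rpow_sub hr, Real.rpow_sub hr, Real.rpow_one]
  have e2 : r ^ (β - 1) = r ^ β / r := by
    rw [Real.rpow_sub hr, Real.rpow_one]
  have e3 : r ^ (p * β - 1) = s / r := by
    rw [hs, Real.rpow_sub hr, Real.rpow_one]
  have e4 : r ^ (β - 2) = r ^ β / r / r := by
    rw [show β - 2 = β - 1 - 1 by ring, e1]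
  have hrb : 0 < r ^ β := Real.rpow_pos_of_pos hr β
  have hDeq : β * ((β - 1) * r ^ (β - 1 - 1)) * (1 + r ^ (p * β))⁻¹ +
        β * r ^ (β - 1) * (-(0 + p * β * r ^ (p * β - 1)) / (1 + r ^ (p * β)) ^ 2)
      = β * r ^ (β - 2) * ((β - 1 + (βb - 1) * s) / (1 + s) ^ 2) := by
    rw [e1, e2, e3, e4, ← hs]
    have : p * β = β - βb := hpβ
    rw [this]
    field_simp
    ring
  refine ⟨?_, ?_, ?_, ?_⟩
  · have := h3.congr_of_eventuallyEq hgev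
    simp only [Pi.inv_apply] at this
    rw [hDeq] at this
    exact this
  · rw [hdval]
    have hrb1 : 0 < r ^ (β - 1) := Real.rpow_pos_of_pos hr _
    rw [e2, e4]
    field_simp
  · rw [le_div_iff₀ h1s]
    nlinarith
  · rw [div_le_iff₀ h1s]
    nlinarith

end
end

section
/- Assume H satisfies Conditions A and B. If sup_{λ>0} Λ_max(λ) < ∞, then max_{|e|=1} H(e, e⊗e) = 0. -/
open Filter Set

noncomputable section

/-- The rank-one matrix `e ⊗ e` with entries `e i * e j`. -/
def outerProd {n : ℕ} (e : Fin n → ℝ) : Matrix (Fin n) (Fin n) ℝ := Matrix.vecMulVec e e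

/-- `e` is a unit vector for the Euclidean norm. -/
def IsUnitVec {n : ℕ} (e : Fin n → ℝ) : Prop := ∑ i, e i ^ 2 = 1

/-- Condition A: monotonicity w.r.t. the Loewner order on symmetric matrices, and `H(q, O) = 0`. -/
def CondA {n : ℕ} (H : (Fin n → ℝ) → Matrix (Fin n) (Fin n) ℝ → ℝ) : Prop :=
  (∀ q X Y, X.IsSymm → Y.IsSymm → (Y - X).PosSemidef → H q X ≤ H q Y) ∧ ∀ q, H q 0 = 0

/-- Condition B: homogeneity of degree `k₁` in the gradient entry and degree one in the matrix. -/
def CondB {n : ℕ} (H : (Fin n → ℝ) → Matrix (Fin n) (Fin n) ℝ → ℝ) (k₁ : ℝ) : Prop :=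
  (∀ (θ : ℝ) (q : Fin n → ℝ) (X : Matrix (Fin n) (Fin n) ℝ), H (θ • q) X = |θ| ^ k₁ * H q X) ∧
  (∀ (θ : ℝ), 0 < θ → ∀ (q : Fin n → ℝ) (X : Matrix (Fin n) (Fin n) ℝ), H q (θ • X) = θ * H q X)


/-- `Λ_max(λ) = max_{|e| = 1} H(e, λ e⊗e + I)`. -/
def LamMax {n : ℕ} (H : (Fin n → ℝ) → Matrix (Fin n) (Fin n) ℝ → ℝ) (lam : ℝ) : ℝ :=
  sSup {y | ∃ e, IsUnitVec e ∧ H e (lam • outerProd e + 1) = y}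

set_option linter.unusedVariables false

lemma outerProd_isSymm {n : ℕ} (e : Fin n → ℝ) : (outerProd e).IsSymm := by
  ext i j
  simp [outerProd, Matrix.vecMulVec, Matrix.transpose_apply, mul_comm]

lemma outerProd_posSemidef {n : ℕ} (e : Fin n → ℝ) : (outerProd e).PosSemidef := by
  rw [Matrix.posSemidef_iff_dotProduct_mulVec]
  constructor
  · exact outerProd_isSymm e
  · intro x
    have : dotProduct (star x) (Matrix.mulVec (outerProd e) x) = (∑ i, x i * e i) ^ 2 := by
      simp only [dotProduct, Matrix.mulVec, outerProd, Matrix.vecMulVec_apply,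
        Pi.star_apply, star_trivial]
      rw [sq, Finset.sum_mul_sum]
      refine Finset.sum_congr rfl fun i _ => ?_
      rw [Finset.mul_sum]
      exact Finset.sum_congr rfl fun j _ => by ring
    rw [this]; positivity

lemma sphere_compact {n : ℕ} : IsCompact {e : Fin n → ℝ | IsUnitVec e} := by
  have hclosed : IsClosed {e : Fin n → ℝ | IsUnitVec e} := by
    have : Continuous fun e : Fin n → ℝ => ∑ i, e i ^ 2 := by
      continuity
    exact isClosed_eq this continuous_const
  have hbdd : Bornology.IsBounded {e : Fin n → ℝ | IsUnitVec e} := by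
    apply (Metric.isBounded_iff_subset_closedBall 0).2
    refine ⟨1, fun e he => ?_⟩
    simp only [Metric.mem_closedBall, dist_zero_right]
    rw [pi_norm_le_iff_of_nonneg zero_le_one]
    intro i
    have h1 : e i ^ 2 ≤ 1 := by
      rw [← he]
      exact Finset.single_le_sum (fun j _ => sq_nonneg (e j)) (Finset.mem_univ i)
    rw [Real.norm_eq_abs, abs_le]
    constructor <;> nlinarith
  exact Metric.isCompact_of_isClosed_isBounded hclosed hbdd

theorem statement14 {n : ℕ} (hn : 2 ≤ n)
    (H : (Fin n → ℝ) → Matrix (Fin n) (Fin n) ℝ → ℝ)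
    (hcont : Continuous (Function.uncurry H))
    (hA : CondA H) (k₁ : ℝ) (hk₁ : 0 ≤ k₁) (hB : CondB H k₁)
    (hbdd : BddAbove (LamMax H '' Set.Ioi 0)) :
    sSup {y | ∃ e, IsUnitVec e ∧ H e (outerProd e) = y} = 0 := by
  obtain ⟨M, hM⟩ := hbdd
  -- every element of the set is 0
  have key : ∀ e : Fin n → ℝ, IsUnitVec e → H e (outerProd e) = 0 := by
    intro e he
    have hge : 0 ≤ H e (outerProd e) := by
      have := hA.1 e 0 (outerProd e) (Matrix.isSymm_zero) (outerProd_isSymm e)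
        (by simpa using outerProd_posSemidef e)
      rw [hA.2 e] at this; exact this
    have hle : H e (outerProd e) ≤ 0 := by
      by_contra hpos
      push_neg at hpos
      -- choose lam large
      obtain ⟨lam, hlam1, hlam2⟩ : ∃ lam : ℝ, 0 < lam ∧ M < lam * H e (outerProd e) := by
        rcases lt_or_ge 0 M with hM0 | hM0
        · exact ⟨2 * M / H e (outerProd e), by positivity, by
            rw [div_mul_eq_mul_div, mul_div_assoc, div_self (ne_of_gt hpos), mul_one]
            linarith⟩
        · exact ⟨1, one_pos, by nlinarith⟩
      -- H e (lam • outerProd e + 1) ≤ LamMax lam ≤ M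
      have hmem : H e (lam • outerProd e + 1) ∈
          {y | ∃ e, IsUnitVec e ∧ H e (lam • outerProd e + 1) = y} := ⟨e, he, rfl⟩
      have hsetbdd : BddAbove {y | ∃ e, IsUnitVec e ∧ H e (lam • outerProd e + 1) = y} := by
        have : {y | ∃ e, IsUnitVec e ∧ H e (lam • outerProd e + 1) = y} =
            (fun e : Fin n → ℝ => H e (lam • outerProd e + 1)) '' {e | IsUnitVec e} := by
          ext y; simp [eq_comm, Set.mem_image]
        rw [this]
        refine (sphere_compact.image ?_).bddAbove
        have hc2 : Continuous fun e : Fin n → ℝ =>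
            lam • outerProd e + (1 : Matrix (Fin n) (Fin n) ℝ) := by
          unfold outerProd; exact (((continuous_const (y := lam)).smul
            (Continuous.matrix_vecMulVec (continuous_id (X := Fin n → ℝ)) continuous_id)).add continuous_const)
        exact hcont.comp (continuous_id.prodMk hc2)
      have h1 : H e (lam • outerProd e + 1) ≤ LamMax H lam := le_csSup hsetbdd hmem
      have h2 : LamMax H lam ≤ M := hM ⟨lam, hlam1, rfl⟩
      have h3 : H e (lam • outerProd e) ≤ H e (lam • outerProd e + 1) := by
        refine hA.1 _ _ _ ?_ ?_ ?_
        · exact (outerProd_isSymm e).smul lam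
        · exact ((outerProd_isSymm e).smul lam).add Matrix.isSymm_one
        · simpa using Matrix.PosSemidef.one
      have h4 : H e (lam • outerProd e) = lam * H e (outerProd e) :=
        hB.2 lam hlam1 e (outerProd e)
      rw [h4] at h3
      linarith
    linarith [le_antisymm hle hge]
  have hne : Nonempty (Fin n) := ⟨⟨0, by omega⟩⟩
  have hset : {y | ∃ e, IsUnitVec e ∧ H e (outerProd e) = y} = {0} := by
    ext y
    constructor
    · rintro ⟨e, he, rfl⟩; exact key e he
    · rintro rfl
      have hu : IsUnitVec (Pi.single (⟨0, by omega⟩ : Fin n) (1 : ℝ)) := by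
        show ∑ i, _ ^ 2 = 1
        simp [Pi.single_apply]
      exact ⟨_, hu, key _ hu⟩
  rw [hset, csSup_singleton]
end
end
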